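/- arXiv:1603.07179 — 2 statements merged into one kernel-verified Lean document; each statement's English description precedes it below -/
import Mathlib

section
/- For each i ∈ I there exists some μ ∈ Ψ such that (μ, α_i^∨) ≠ 0; consequently ±α_i = s_i(μ) − μ ∈ ℤΨ for such μ, and hence Φ ⊆ ℤΨ. -/
noncomputable section

open scoped BigOperators

/-- `pr B x y` is the pairing `(x, y^∨) = 2(x,y)/(y,y)`. -/
def pr {E : Type} [AddCommGroup E] [Module ℚ E] (B : E →ₗ[ℚ] E →ₗ[ℚ] ℚ) (x y : E) : ℚ :=
  2 * B x y / B y y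

/-- A reduced irreducible crystallographic root system `Φ` in a finite-dimensional ℚ-vector
space `E` equipped with a positive definite symmetric bilinear form, together with a system of
simple roots `α i` (`i ∈ I`). -/
structure RootSystemCtx (E I : Type) [AddCommGroup E] [Module ℚ E] [Fintype I] : Type where
  B : E →ₗ[ℚ] E →ₗ[ℚ] ℚ
  Bsymm : ∀ x y, B x y = B y x
  Bpos : ∀ x, x ≠ 0 → 0 < B x x
  findim : FiniteDimensional ℚ E
  Φ : Set E
  Φfin : Φ.Finite
  zero_nmem : (0 : E) ∉ Φ
  reduced : ∀ a ∈ Φ, ∀ b ∈ Φ, b ≠ a → b ≠ -a → LinearIndependent ℚ ![a, b]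
  crystal : ∀ a ∈ Φ, ∀ b ∈ Φ, ∃ n : ℤ, pr B b a = (n : ℚ)
  reflect_mem : ∀ a ∈ Φ, ∀ b ∈ Φ, b - pr B b a • a ∈ Φ
  α : I → E
  α_mem : ∀ i, α i ∈ Φ
  α_indep : LinearIndependent ℚ α
  α_span : Submodule.span ℚ (Set.range α) = ⊤
  pos_neg : ∀ b ∈ Φ, (∃ cf : I → ℤ, (∀ i, 0 ≤ cf i) ∧ b = ∑ i, (cf i : ℚ) • α i) ∨
      (∃ cf : I → ℤ, (∀ i, cf i ≤ 0) ∧ b = ∑ i, (cf i : ℚ) • α i)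
  irred : ¬ ∃ Φ₁ Φ₂ : Set E, Φ₁.Nonempty ∧ Φ₂.Nonempty ∧ Φ₁ ∪ Φ₂ = Φ ∧
      ∀ a ∈ Φ₁, ∀ b ∈ Φ₂, B a b = 0

namespace RootSystemCtx

variable {E I : Type} [AddCommGroup E] [Module ℚ E] [Fintype I] (c : RootSystemCtx E I)

/-- The linear functional `(·, a^∨)`. -/
def coform (a : E) : Module.Dual ℚ E := (2 * (c.B a a)⁻¹) • (c.B.flip a)

lemma coform_apply (a x : E) : c.coform a x = pr c.B x a := by
  simp only [coform, LinearMap.smul_apply, LinearMap.flip_apply, smul_eq_mul, pr,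
    div_eq_mul_inv]
  ring

lemma coform_self {a : E} (ha : a ∈ c.Φ) : c.coform a a = 2 := by
  have h0 : a ≠ 0 := fun h => c.zero_nmem (h ▸ ha)
  have hB : c.B a a ≠ 0 := ne_of_gt (c.Bpos a h0)
  rw [coform_apply, pr]
  field_simp

/-- The simple reflection `s i : v ↦ v - (v, αᵢ^∨) αᵢ`. -/
def s (i : I) : E ≃ₗ[ℚ] E := Module.reflection (c.coform_self (c.α_mem i))

lemma s_apply (i : I) (v : E) : c.s i v = v - pr c.B v (c.α i) • c.α i := by
  rw [s, Module.reflection_apply, coform_apply]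

/-- The Weyl group, as a subgroup of the group of linear automorphisms of `E`. -/
def Weyl : Subgroup (E ≃ₗ[ℚ] E) := Subgroup.closure (Set.range c.s)

/-- `lam` is a minuscule (dominant) weight: a nonzero dominant weight (integral pairing
with every simple coroot) with `(lam, a^∨) ∈ {0, ±1}` for every root `a`. -/
def IsMinuscule (lam : E) : Prop :=
  lam ≠ 0 ∧ (∀ i, ∃ n : ℤ, pr c.B lam (c.α i) = (n : ℚ)) ∧ (∀ i, 0 ≤ pr c.B lam (c.α i)) ∧
    ∀ a ∈ c.Φ, pr c.B lam a = 0 ∨ pr c.B lam a = 1 ∨ pr c.B lam a = -1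

/-- `b` is a positive root. -/
def IsPos (b : E) : Prop :=
  b ∈ c.Φ ∧ ∃ cf : I → ℚ, (∀ i, 0 ≤ cf i) ∧ b = ∑ i, cf i • c.α i

end RootSystemCtx

/-- A nonempty union `Ψ` of Weyl group orbits of minuscule weights. -/
structure PsiData {E I : Type} [AddCommGroup E] [Module ℚ E] [Fintype I]
    (c : RootSystemCtx E I) : Type where
  Ψ : Set E
  nonempty : Ψ.Nonempty
  finite : Ψ.Finite
  orbit : ∀ μ ∈ Ψ, ∃ lam, c.IsMinuscule lam ∧ ∃ w ∈ c.Weyl, w lam = μ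
  stab : ∀ μ ∈ Ψ, ∀ w ∈ c.Weyl, w μ ∈ Ψ

/-- `nOp e f i t tinv` is the operator `(1 + t eᵢ)(1 - t⁻¹ fᵢ)(1 + t eᵢ)`, where `tinv`
is the inverse of `t`. -/
def nOp {I K M' : Type} [CommRing K] [AddCommGroup M'] [Module K M']
    (e f : I → Module.End K M') (i : I) (t tinv : K) : Module.End K M' :=
  (1 + t • e i) * (1 - tinv • f i) * (1 + t • e i)

/-- `hOp e f i t` is the operator `hᵢ(t) = nᵢ(t) nᵢ(-1)` for a unit `t`. -/
def hOp {I K M' : Type} [CommRing K] [AddCommGroup M'] [Module K M']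
    (e f : I → Module.End K M') (i : I) (t : Kˣ) : Module.End K M' :=
  nOp e f i (t : K) ((t⁻¹ : Kˣ) : K) * nOp e f i ((-1 : Kˣ) : K) (((-1 : Kˣ)⁻¹ : Kˣ) : K)

/-- Conjugation `n_{i₁} ⋯ n_{i_k} x n_{i_k}⁻¹ ⋯ n_{i₁}⁻¹` for a list `l = [i₁, …, i_k]`. -/
def conjOp {I M' : Type} [AddCommGroup M'] [Module ℂ M'] (nu : I → (Module.End ℂ M')ˣ)
    (x : Module.End ℂ M') (l : List I) : Module.End ℂ M' :=
  ↑((l.map nu).prod) * x * ↑(((l.map nu).prod)⁻¹)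

attribute [local instance 100] LieRing.ofAssociativeRing

/-- The Lie subalgebra of `𝔤𝔩(M)` generated by the `eᵢ` and `fᵢ`. -/
def genLie {I M' : Type} [AddCommGroup M'] [Module ℂ M'] (e f : I → Module.End ℂ M') :
    LieSubalgebra ℂ (Module.End ℂ M') :=
  LieSubalgebra.lieSpan ℂ (Module.End ℂ M') (Set.range e ∪ Set.range f)

/-- The root space `𝔤_a = {x ∈ 𝔤 ∣ [hⱼ, x] = (a, αⱼ^∨) x for all j}`, as a set. -/
def rootSet {E I M' : Type} [AddCommGroup E] [Module ℚ E] [Fintype I]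
    [AddCommGroup M'] [Module ℂ M'] (c : RootSystemCtx E I)
    (e f h : I → Module.End ℂ M') (a : E) : Set (Module.End ℂ M') :=
  {x | x ∈ genLie e f ∧ ∀ j, ⁅h j, x⁆ = ((pr c.B a (c.α j) : ℚ) : ℂ) • x}

/-- The root space `𝔤_a`, as a submodule of `𝔤𝔩(M)`. -/
def rootSp {E I M' : Type} [AddCommGroup E] [Module ℚ E] [Fintype I]
    [AddCommGroup M'] [Module ℂ M'] (c : RootSystemCtx E I)
    (e f h : I → Module.End ℂ M') (a : E) : Submodule ℂ (Module.End ℂ M') :=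
  (genLie e f).toSubmodule ⊓ ⨅ j : I,
    Module.End.eigenspace
      (LinearMap.mulLeft ℂ (h j) - LinearMap.mulRight ℂ (h j) : Module.End ℂ (Module.End ℂ M'))
      ((pr c.B a (c.α j) : ℚ) : ℂ)

/-- The diagonal subgroup `H` generated by all `hᵢ(t)`, `t ∈ Kˣ`. -/
def Hgroup {I K M' : Type} [CommRing K] [AddCommGroup M'] [Module K M']
    (e f : I → Module.End K M') : Subgroup (Module.End K M')ˣ :=
  Subgroup.closure {g | ∃ (i : I) (t : Kˣ), (g : Module.End K M') = hOp e f i t}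

/-- The monomial subgroup `N` generated by all `nᵢ(t)`, `t ∈ Kˣ`. -/
def Ngroup {I K M' : Type} [CommRing K] [AddCommGroup M'] [Module K M']
    (e f : I → Module.End K M') : Subgroup (Module.End K M')ˣ :=
  Subgroup.closure {g | ∃ (i : I) (t : Kˣ),
    (g : Module.End K M') = nOp e f i (t : K) ((t⁻¹ : Kˣ) : K)}

/-- The subgroup `U⁺` generated by all `x_γ(t) = 1 + t ē_γ` with `γ ∈ Φ⁺`. -/
def Uplus {E I K M' : Type} [AddCommGroup E] [Module ℚ E] [Fintype I]
    [CommRing K] [AddCommGroup M'] [Module K M'] (c : RootSystemCtx E I)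
    (eb : E → Module.End K M') : Subgroup (Module.End K M')ˣ :=
  Subgroup.closure {g | ∃ γ, c.IsPos γ ∧ ∃ t : K, (g : Module.End K M') = 1 + t • eb γ}

/-- The subgroup `U⁻` generated by all `x_γ(t) = 1 + t ē_γ` with `γ ∈ Φ⁻`. -/
def Uminus {E I K M' : Type} [AddCommGroup E] [Module ℚ E] [Fintype I]
    [CommRing K] [AddCommGroup M'] [Module K M'] (c : RootSystemCtx E I)
    (eb : E → Module.End K M') : Subgroup (Module.End K M')ˣ :=
  Subgroup.closure {g | ∃ γ, c.IsPos (-γ) ∧ ∃ t : K, (g : Module.End K M') = 1 + t • eb γ}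

/-- The subgroup `Uᵢ⁺` generated by all `x_γ(t)` with `γ ∈ Φ⁺`, `γ ≠ αᵢ`. -/
def UplusI {E I K M' : Type} [AddCommGroup E] [Module ℚ E] [Fintype I]
    [CommRing K] [AddCommGroup M'] [Module K M'] (c : RootSystemCtx E I)
    (eb : E → Module.End K M') (i : I) : Subgroup (Module.End K M')ˣ :=
  Subgroup.closure {g | ∃ γ, c.IsPos γ ∧ γ ≠ c.α i ∧ ∃ t : K, (g : Module.End K M') = 1 + t • eb γ}

namespace RootSystemCtx

variable {E I : Type} [AddCommGroup E] [Module ℚ E] [Fintype I] (c : RootSystemCtx E I)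

lemma ne_zero_of_mem {a : E} (ha : a ∈ c.Φ) : a ≠ 0 := fun h => c.zero_nmem (h ▸ ha)

lemma Bself_pos {a : E} (ha : a ∈ c.Φ) : 0 < c.B a a := c.Bpos a (c.ne_zero_of_mem ha)

lemma Bself_ne {a : E} (ha : a ∈ c.Φ) : c.B a a ≠ 0 := ne_of_gt (c.Bself_pos ha)

lemma pr_self {a : E} (ha : a ∈ c.Φ) : pr c.B a a = 2 := by
  have hB := c.Bself_ne ha
  rw [pr]; field_simp

lemma neg_mem_Phi {b : E} (hb : b ∈ c.Φ) : -b ∈ c.Φ := by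
  have h := c.reflect_mem b hb b hb
  rw [c.pr_self hb] at h
  have : b - (2:ℚ) • b = -b := by module
  rwa [this] at h

lemma pr_sub (x y z : E) : pr c.B (x - y) z = pr c.B x z - pr c.B y z := by
  simp only [pr, map_sub, LinearMap.sub_apply]
  ring

lemma pr_smul (r : ℚ) (x z : E) : pr c.B (r • x) z = r * pr c.B x z := by
  simp only [pr, map_smul, LinearMap.smul_apply, smul_eq_mul]
  ring

lemma pr_eq_zero_iff {x a : E} (ha : a ∈ c.Φ) : pr c.B x a = 0 ↔ c.B x a = 0 := by
  rw [pr, div_eq_zero_iff]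
  have := c.Bself_ne ha
  constructor
  · rintro (h | h)
    · linarith [mul_eq_zero.mp h]
      -- fallback
    · exact absurd h this
  · intro h; left; rw [h, mul_zero]

/-- A "good" automorphism: preserves the form and the root set (both ways). -/
def Good (w : E ≃ₗ[ℚ] E) : Prop :=
  (∀ x y, c.B (w x) (w y) = c.B x y) ∧ (∀ b ∈ c.Φ, w b ∈ c.Φ) ∧ (∀ b ∈ c.Φ, w⁻¹ b ∈ c.Φ)

lemma s_inv (i : I) : (c.s i)⁻¹ = c.s i := by
  show (c.s i).symm = c.s i
  rw [s, Module.reflection_symm]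

lemma good_s (i : I) : c.Good (c.s i) := by
  refine ⟨?_, ?_, ?_⟩
  · intro x y
    rw [c.s_apply, c.s_apply]
    have hB := c.Bself_ne (c.α_mem i)
    have h1 : c.B (c.α i) y = c.B y (c.α i) := c.Bsymm _ _
    simp only [pr, map_sub, map_smul, LinearMap.sub_apply, LinearMap.smul_apply, smul_eq_mul]
    rw [h1]
    field_simp
    ring
  · intro b hb
    rw [c.s_apply]
    exact c.reflect_mem _ (c.α_mem i) b hb
  · intro b hb
    rw [c.s_inv, c.s_apply]
    exact c.reflect_mem _ (c.α_mem i) b hb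

lemma good_one : c.Good 1 :=
  ⟨fun _ _ => rfl, fun _ hb => hb, fun _ hb => hb⟩

lemma good_mul {w v : E ≃ₗ[ℚ] E} (hw : c.Good w) (hv : c.Good v) : c.Good (w * v) := by
  refine ⟨fun x y => ?_, fun b hb => ?_, fun b hb => ?_⟩
  · show c.B (w (v x)) (w (v y)) = c.B x y
    rw [hw.1, hv.1]
  · exact hw.2.1 _ (hv.2.1 b hb)
  · rw [mul_inv_rev]
    exact hv.2.2 _ (hw.2.2 b hb)

lemma good_inv {w : E ≃ₗ[ℚ] E} (hw : c.Good w) : c.Good w⁻¹ := by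
  refine ⟨fun x y => ?_, hw.2.2, fun b hb => by simpa [inv_inv] using hw.2.1 b hb⟩
  have := hw.1 (w⁻¹ x) (w⁻¹ y)
  rw [show w (w⁻¹ x) = x from w.apply_symm_apply x,
    show w (w⁻¹ y) = y from w.apply_symm_apply y] at this
  exact this.symm

lemma good_of_mem_Weyl {w : E ≃ₗ[ℚ] E} (hw : w ∈ c.Weyl) : c.Good w := by
  induction hw using Subgroup.closure_induction with
  | mem x hx => obtain ⟨i, rfl⟩ := hx; exact c.good_s i
  | one => exact c.good_one
  | mul x y _ _ hx hy => exact c.good_mul hx hy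
  | inv x _ hx => exact c.good_inv hx

lemma s_mem_Weyl (i : I) : c.s i ∈ c.Weyl :=
  Subgroup.subset_closure ⟨i, rfl⟩

lemma pr_orbit {w : E ≃ₗ[ℚ] E} (hw : c.Good w) (lam a : E) :
    pr c.B (w lam) a = pr c.B lam (w⁻¹ a) := by
  have h1 : w (w⁻¹ a) = a := w.apply_symm_apply a
  have e1 : c.B (w lam) a = c.B lam (w⁻¹ a) := by
    conv_lhs => rw [← h1]
    rw [hw.1]
  have e2 : c.B a a = c.B (w⁻¹ a) (w⁻¹ a) := by
    conv_lhs => rw [← h1]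
    rw [hw.1]
  rw [pr, pr, e1, e2]

end RootSystemCtx
namespace RootSystemCtx

variable {E I : Type} [AddCommGroup E] [Module ℚ E] [Fintype I] (c : RootSystemCtx E I)

lemma pr_psi (P : PsiData c) {μ : E} (hμ : μ ∈ P.Ψ) {a : E} (ha : a ∈ c.Φ) :
    pr c.B μ a = 0 ∨ pr c.B μ a = 1 ∨ pr c.B μ a = -1 := by
  obtain ⟨lam, hlam, w, hwW, rfl⟩ := P.orbit μ hμ
  have hg := c.good_of_mem_Weyl hwW
  rw [c.pr_orbit hg lam a]
  exact hlam.2.2.2 _ (hg.2.2 a ha)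

lemma psi_ne_zero (P : PsiData c) {μ : E} (hμ : μ ∈ P.Ψ) : μ ≠ 0 := by
  obtain ⟨lam, hlam, w, _, rfl⟩ := P.orbit μ hμ
  simpa using fun h => hlam.1 h

lemma cf_unique {cf cf' : I → ℚ} (h : ∑ i, cf i • c.α i = ∑ i, cf' i • c.α i) : cf = cf' := by
  funext i
  have h0 : ∑ i, (cf i - cf' i) • c.α i = 0 := by
    simp only [sub_smul, Finset.sum_sub_distrib, h, sub_self]
  have := Fintype.linearIndependent_iff.mp c.α_indep _ h0 i
  linarith

lemma ortho_span {X Y : Set E} (h : ∀ x ∈ X, ∀ y ∈ Y, c.B x y = 0) :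
    ∀ a ∈ Submodule.span ℚ X, ∀ b ∈ Submodule.span ℚ Y, c.B a b = 0 := by
  have base : ∀ x ∈ X, ∀ b ∈ Submodule.span ℚ Y, c.B x b = 0 := by
    intro x hx b hb
    induction hb using Submodule.span_induction with
    | mem y hy => exact h x hx y hy
    | zero => simp
    | add y z _ _ hy hz => rw [map_add, hy, hz, add_zero]
    | smul r y _ hy => rw [map_smul, hy, smul_zero]
  intro a ha
  induction ha using Submodule.span_induction with
  | mem x hx => exact base x hx
  | zero => intro b hb; simp
  | add x y _ _ hx hy =>
    intro b hb
    rw [map_add, LinearMap.add_apply, hx b hb, hy b hb, add_zero]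
  | smul r x _ hx =>
    intro b hb
    rw [map_smul, LinearMap.smul_apply, hx b hb, smul_zero]

end RootSystemCtx
namespace RootSystemCtx

variable {E I : Type} [AddCommGroup E] [Module ℚ E] [Fintype I] (c : RootSystemCtx E I)

lemma root_dichotomy_aux (p : I → Prop) [DecidablePred p]
    (hortho : ∀ i j, p i → ¬ p j → c.B (c.α i) (c.α j) = 0) :
    ∀ n : ℕ, ∀ b ∈ c.Φ, ∀ cf : I → ℤ, (∀ i, 0 ≤ cf i) →
      b = ∑ i, (cf i : ℚ) • c.α i → (∑ i, cf i) = (n : ℤ) →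
      (∀ i, ¬ p i → cf i = 0) ∨ (∀ i, p i → cf i = 0) := by
  intro n
  induction n using Nat.strong_induction_on with
  | _ n IH =>
  intro b hb cf hpos hrep hsum
  classical
  by_cases hS : ∀ i, ¬ p i → cf i = 0
  · exact Or.inl hS
  by_cases hT : ∀ i, p i → cf i = 0
  · exact Or.inr hT
  push_neg at hS hT
  obtain ⟨s0, hps0, hcs0⟩ := hS
  obtain ⟨t0, hpt0, hct0⟩ := hT
  exfalso
  set bT : E := ∑ i, (if p i then (cf i : ℚ) else 0) • c.α i with hbT
  set bS : E := ∑ i, (if p i then 0 else (cf i : ℚ)) • c.α i with hbS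
  have hsplit : b = bT + bS := by
    rw [hrep, hbT, hbS, ← Finset.sum_add_distrib]
    refine Finset.sum_congr rfl fun i _ => ?_
    by_cases h : p i <;> simp [h]
  have hbT0 : bT ≠ 0 := by
    intro h0
    have h1 := Fintype.linearIndependent_iff.mp c.α_indep _ h0 t0
    rw [if_pos hpt0] at h1
    exact hct0 (by exact_mod_cast h1)
  have hbTmem : bT ∈ Submodule.span ℚ (c.α '' {i | p i}) := by
    refine Submodule.sum_mem _ fun i _ => ?_
    by_cases h : p i
    · exact Submodule.smul_mem _ _ (Submodule.subset_span ⟨i, h, rfl⟩)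
    · simp [h]
  have hbSmem : bS ∈ Submodule.span ℚ (c.α '' {i | ¬ p i}) := by
    refine Submodule.sum_mem _ fun i _ => ?_
    by_cases h : p i
    · simp [h]
    · exact Submodule.smul_mem _ _ (Submodule.subset_span ⟨i, h, rfl⟩)
  have hST : c.B bS bT = 0 := by
    refine c.ortho_span ?_ bS hbSmem bT hbTmem
    rintro x ⟨i, hi, rfl⟩ y ⟨j, hj, rfl⟩
    rw [c.Bsymm]
    exact hortho j i hj hi
  have hBbT : 0 < c.B b bT := by
    rw [hsplit, map_add, LinearMap.add_apply, hST, add_zero]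
    exact c.Bpos bT hbT0
  have hsum' : c.B b bT = ∑ i, (if p i then (cf i : ℚ) else 0) * c.B b (c.α i) := by
    rw [hbT, map_sum]
    refine Finset.sum_congr rfl fun i _ => ?_
    rw [map_smul, smul_eq_mul]
  have hex : ∃ t, p t ∧ 0 < cf t ∧ 0 < c.B b (c.α t) := by
    by_contra hno
    push_neg at hno
    have hle : ∑ i, (if p i then (cf i : ℚ) else 0) * c.B b (c.α i) ≤ 0 := by
      refine Finset.sum_nonpos fun i _ => ?_
      by_cases h : p i
      · rcases (hpos i).lt_or_eq with hlt | heq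
        · have hB := hno i h hlt
          have h0 : (0:ℚ) ≤ (cf i : ℚ) := by exact_mod_cast hpos i
          rw [if_pos h]
          exact mul_nonpos_iff.mpr (Or.inl ⟨h0, hB⟩)
        · rw [if_pos h, ← heq]; simp
      · rw [if_neg h, zero_mul]
    rw [hsum'] at hBbT
    linarith
  obtain ⟨t, hpt, hcft, hBbt⟩ := hex
  obtain ⟨m, hm⟩ := c.crystal (c.α t) (c.α_mem t) b hb
  have hαt := c.Bself_pos (c.α_mem t)
  have hprpos : 0 < pr c.B b (c.α t) := by
    rw [pr]; exact div_pos (by linarith) hαt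
  have hm0 : 0 < m := by
    rw [hm] at hprpos; exact_mod_cast hprpos
  have hb' : b - (m:ℚ) • c.α t ∈ c.Φ := by
    have h1 := c.reflect_mem (c.α t) (c.α_mem t) b hb
    rwa [hm] at h1
  set cf' : I → ℤ := fun i => if i = t then cf i - m else cf i with hcf'
  have hrep' : b - (m:ℚ) • c.α t = ∑ i, (cf' i : ℚ) • c.α i := by
    have h2 : ∑ i, (if i = t then (m:ℚ) • c.α i else 0) = (m:ℚ) • c.α t := by simp
    rw [hrep, ← h2, ← Finset.sum_sub_distrib]
    refine Finset.sum_congr rfl fun i _ => ?_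
    by_cases h : i = t
    · subst h
      simp only [hcf', if_pos rfl]
      push_cast
      rw [sub_smul]
    · simp [hcf', h]
  have hcf'eq : ∀ dg : I → ℤ, (b - (m:ℚ) • c.α t = ∑ i, (dg i : ℚ) • c.α i) → dg = cf' := by
    intro dg hdg
    have h1 := c.cf_unique (cf := fun i => (dg i : ℚ)) (cf' := fun i => (cf' i : ℚ))
      (by rw [← hdg, hrep'])
    funext i
    have h2 := congrFun h1 i
    exact_mod_cast h2
  have hs0t : s0 ≠ t := fun h => hps0 (h ▸ hpt)
  have hcf's0 : cf' s0 = cf s0 := by simp only [hcf', if_neg hs0t]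
  have hposall : ∀ i, 0 ≤ cf' i := by
    rcases c.pos_neg _ hb' with ⟨dg, h1, h2⟩ | ⟨dg, h1, h2⟩
    · intro i; rw [← hcf'eq dg h2]; exact h1 i
    · exfalso
      have h3 := h1 s0
      rw [hcf'eq dg h2, hcf's0] at h3
      have h4 := hpos s0
      omega
  have hsum'' : ∑ i, cf' i = (n:ℤ) - m := by
    have h2 : ∑ i, (if i = t then m else 0) = m := by simp
    have h3 : ∑ i, (cf' i + if i = t then m else 0) = ∑ i, cf i :=
      Finset.sum_congr rfl fun i _ => by
        by_cases h : i = t <;> simp [hcf', h]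
    rw [Finset.sum_add_distrib, h2, hsum] at h3
    omega
  have hk0 : (0:ℤ) ≤ (n:ℤ) - m := hsum'' ▸ Finset.sum_nonneg fun i _ => hposall i
  set k : ℕ := ((n:ℤ) - m).toNat with hkdef
  have hk : (k:ℤ) = (n:ℤ) - m := Int.toNat_of_nonneg hk0
  have hkn : k < n := by omega
  rcases IH k hkn (b - (m:ℚ) • c.α t) hb' cf' hposall hrep' (by rw [hsum'', hk]) with hL | hR
  · exact hcs0 (by rw [← hcf's0]; exact hL s0 hps0)
  · have hct : cf t = m := by
      have h1 := hR t hpt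
      simp only [hcf', if_pos rfl] at h1
      omega
    have hBval : c.B b (c.α t) = (m:ℚ) * c.B (c.α t) (c.α t) := by
      rw [hrep, map_sum, LinearMap.sum_apply]
      rw [Finset.sum_eq_single_of_mem t (Finset.mem_univ t) ?_]
      · rw [map_smul, LinearMap.smul_apply, smul_eq_mul, hct]
      · intro i _ hit
        rw [map_smul, LinearMap.smul_apply, smul_eq_mul]
        by_cases h : p i
        · have h1 := hR i h
          simp only [hcf', if_neg hit] at h1
          rw [h1]; simp
        · rw [c.Bsymm, hortho t i hpt h, mul_zero]
    have hpr2 : pr c.B b (c.α t) = 2 * m := by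
      rw [pr, hBval]
      field_simp
    rw [hm] at hpr2
    have : m = 2 * m := by exact_mod_cast hpr2
    omega

lemma root_dichotomy (p : I → Prop) [DecidablePred p]
    (hortho : ∀ i j, p i → ¬ p j → c.B (c.α i) (c.α j) = 0)
    {b : E} (hb : b ∈ c.Φ) :
    b ∈ Submodule.span ℚ (c.α '' {i | p i}) ∨ b ∈ Submodule.span ℚ (c.α '' {i | ¬ p i}) := by
  have main : ∀ b ∈ c.Φ, ∀ cf : I → ℤ, (∀ i, 0 ≤ cf i) → b = ∑ i, (cf i : ℚ) • c.α i →
      b ∈ Submodule.span ℚ (c.α '' {i | p i}) ∨ b ∈ Submodule.span ℚ (c.α '' {i | ¬ p i}) := by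
    intro b hb cf hpos hrep
    classical
    have hk0 : (0:ℤ) ≤ ∑ i, cf i := Finset.sum_nonneg fun i _ => hpos i
    have hk : ((∑ i, cf i).toNat : ℤ) = ∑ i, cf i := Int.toNat_of_nonneg hk0
    rcases c.root_dichotomy_aux p hortho (∑ i, cf i).toNat b hb cf hpos hrep hk.symm with h | h
    · left
      rw [hrep]
      refine Submodule.sum_mem _ fun i _ => ?_
      by_cases hi : p i
      · exact Submodule.smul_mem _ _ (Submodule.subset_span ⟨i, hi, rfl⟩)
      · rw [h i hi]; simp
    · right
      rw [hrep]
      refine Submodule.sum_mem _ fun i _ => ?_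
      by_cases hi : p i
      · rw [h i hi]; simp
      · exact Submodule.smul_mem _ _ (Submodule.subset_span ⟨i, hi, rfl⟩)
  rcases c.pos_neg b hb with ⟨cf, h1, h2⟩ | ⟨cf, h1, h2⟩
  · exact main b hb cf h1 h2
  · have hnb : -b ∈ c.Φ := c.neg_mem_Phi hb
    have hrep : -b = ∑ i, ((-cf i : ℤ) : ℚ) • c.α i := by
      rw [h2, ← Finset.sum_neg_distrib]
      refine Finset.sum_congr rfl fun i _ => ?_
      push_cast
      rw [neg_smul]
    rcases main (-b) hnb (fun i => -cf i) (fun i => by show (0:ℤ) ≤ -cf i; have := h1 i; omega) hrep with h | h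
    · left; simpa using Submodule.neg_mem _ h
    · right; simpa using Submodule.neg_mem _ h

end RootSystemCtx
namespace RootSystemCtx

variable {E I : Type} [AddCommGroup E] [Module ℚ E] [Fintype I] (c : RootSystemCtx E I)

lemma exists_pairing (P : PsiData c) : ∀ i, ∃ μ ∈ P.Ψ, pr c.B μ (c.α i) ≠ 0 := by
  classical
  by_contra hcon
  push_neg at hcon
  obtain ⟨i0, hi0⟩ := hcon
  set p : I → Prop := fun i => ∀ μ ∈ P.Ψ, pr c.B μ (c.α i) = 0 with hp
  have hortho : ∀ i j, p i → ¬ p j → c.B (c.α i) (c.α j) = 0 := by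
    intro i j hpi hpj
    simp only [hp] at hpj
    push_neg at hpj
    obtain ⟨μ, hμ, hne⟩ := hpj
    have hsμ : c.s j μ ∈ P.Ψ := P.stab μ hμ _ (c.s_mem_Weyl j)
    have h1 : pr c.B (c.s j μ) (c.α i) = 0 := hpi _ hsμ
    rw [c.s_apply, c.pr_sub, c.pr_smul] at h1
    have h2 : pr c.B μ (c.α i) = 0 := hpi μ hμ
    rw [h2, zero_sub, neg_eq_zero, mul_eq_zero] at h1
    rcases h1 with h1 | h1
    · exact absurd h1 hne
    · rw [c.pr_eq_zero_iff (c.α_mem i)] at h1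
      rw [c.Bsymm]
      exact h1
  obtain ⟨μ0, hμ0⟩ := P.nonempty
  have hμ0ne := c.psi_ne_zero P hμ0
  have hμ0mem : μ0 ∈ Submodule.span ℚ (Set.range c.α) := by rw [c.α_span]; trivial
  obtain ⟨d, hd⟩ := (Submodule.mem_span_range_iff_exists_fun ℚ).mp hμ0mem
  have hpos0 : 0 < c.B μ0 μ0 := c.Bpos μ0 hμ0ne
  have hBsum : c.B μ0 μ0 = ∑ i, d i * c.B μ0 (c.α i) := by
    have h4 : c.B μ0 μ0 = c.B μ0 (∑ i, d i • c.α i) := by rw [hd]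
    rw [h4, map_sum]
    exact Finset.sum_congr rfl fun i _ => by rw [map_smul, smul_eq_mul]
  have hj : ∃ j, ¬ p j := by
    have hex : ∃ j, d j * c.B μ0 (c.α j) ≠ 0 := by
      by_contra hall
      push_neg at hall
      rw [hBsum, Finset.sum_eq_zero fun i _ => hall i] at hpos0
      exact lt_irrefl 0 hpos0
    obtain ⟨j, hj⟩ := hex
    refine ⟨j, fun hpj => ?_⟩
    have h3 := hpj μ0 hμ0
    rw [c.pr_eq_zero_iff (c.α_mem j)] at h3
    exact hj (by rw [h3, mul_zero])
  obtain ⟨j0, hj0⟩ := hj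
  refine c.irred ⟨c.Φ ∩ (Submodule.span ℚ (c.α '' {i | p i}) : Set E),
    c.Φ ∩ (Submodule.span ℚ (c.α '' {i | ¬ p i}) : Set E), ?_, ?_, ?_, ?_⟩
  · exact ⟨c.α i0, c.α_mem i0, Submodule.subset_span ⟨i0, hi0, rfl⟩⟩
  · exact ⟨c.α j0, c.α_mem j0, Submodule.subset_span ⟨j0, hj0, rfl⟩⟩
  · apply Set.Subset.antisymm
    · rintro x (⟨hx, _⟩ | ⟨hx, _⟩) <;> exact hx
    · intro b hb
      rcases c.root_dichotomy p hortho hb with h | h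
      · exact Or.inl ⟨hb, h⟩
      · exact Or.inr ⟨hb, h⟩
  · rintro a ⟨_, ha⟩ b ⟨_, hb⟩
    refine c.ortho_span ?_ a ha b hb
    rintro x ⟨i, hi, rfl⟩ y ⟨j, hj, rfl⟩
    exact hortho i j hi hj

end RootSystemCtx
/-- Lemma 2.3: for each i there is μ ∈ Ψ pairing nontrivially with αᵢ^∨; for such μ,
sᵢ(μ) - μ = ±αᵢ lies in ℤΨ, and consequently Φ ⊆ ℤΨ. -/
theorem stmt_0 {E I : Type} [AddCommGroup E] [Module ℚ E] [Fintype I]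
    (c : RootSystemCtx E I) (P : PsiData c)
    :
    (∀ i : I, ∃ μ ∈ P.Ψ, pr c.B μ (c.α i) ≠ 0) ∧
    (∀ i : I, ∀ μ ∈ P.Ψ, pr c.B μ (c.α i) ≠ 0 →
      (c.s i μ - μ = c.α i ∨ c.s i μ - μ = -c.α i) ∧
      c.s i μ - μ ∈ AddSubgroup.closure P.Ψ) ∧
    c.Φ ⊆ (AddSubgroup.closure P.Ψ : Set E) := by
  classical
  have part1 := c.exists_pairing P
  have part2 : ∀ i : I, ∀ μ ∈ P.Ψ, pr c.B μ (c.α i) ≠ 0 →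
      (c.s i μ - μ = c.α i ∨ c.s i μ - μ = -c.α i) ∧
      c.s i μ - μ ∈ AddSubgroup.closure P.Ψ := by
    intro i μ hμ hne
    have hdiff : c.s i μ - μ = -(pr c.B μ (c.α i) • c.α i) := by
      rw [c.s_apply]
      abel
    constructor
    · rcases c.pr_psi P hμ (c.α_mem i) with h | h | h
      · exact absurd h hne
      · right
        rw [hdiff, h, one_smul]
      · left
        rw [hdiff, h, neg_smul, one_smul, neg_neg]
    · have h1 : c.s i μ ∈ P.Ψ := P.stab μ hμ _ (c.s_mem_Weyl i)
      exact sub_mem (AddSubgroup.subset_closure h1) (AddSubgroup.subset_closure hμ)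
  refine ⟨part1, part2, ?_⟩
  have hα : ∀ i, c.α i ∈ AddSubgroup.closure P.Ψ := by
    intro i
    obtain ⟨μ, hμ, hne⟩ := part1 i
    obtain ⟨hcase, hmem⟩ := part2 i μ hμ hne
    rcases hcase with h | h
    · rwa [h] at hmem
    · rw [h] at hmem
      simpa using AddSubgroup.neg_mem _ hmem
  intro b hb
  rcases c.pos_neg b hb with ⟨cf, _, h2⟩ | ⟨cf, _, h2⟩ <;>
  · rw [h2]
    refine AddSubgroup.sum_mem _ fun i _ => ?_
    rw [Int.cast_smul_eq_zsmul ℚ]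
    exact AddSubgroup.zsmul_mem _ (hα i) _
end
end

section
/- For all i ≠ j in I, the Serre relations hold in 𝔤𝔩(M): ad(e_i)^{1−a_{ij}}(e_j) = 0 and ad(f_i)^{1−a_{ij}}(f_j) = 0, where a_{ij} = (α_j, α_i^∨) and ad(x)(y) = [x, y]. -/
noncomputable section

open scoped BigOperators

attribute [local instance] LieRing.ofAssociativeRing

section SerreAux

variable {E I : Type} [AddCommGroup E] [Module ℚ E] [Fintype I]

lemma pr_add' (B : E →ₗ[ℚ] E →ₗ[ℚ] ℚ) (x y a : E) :
    pr B (x + y) a = pr B x a + pr B y a := by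
  simp only [pr, map_add, LinearMap.add_apply]
  ring

lemma pr_sub' (B : E →ₗ[ℚ] E →ₗ[ℚ] ℚ) (x y a : E) :
    pr B (x - y) a = pr B x a - pr B y a := by
  simp only [pr, map_sub, LinearMap.sub_apply]
  ring

lemma pr_self' (c : RootSystemCtx E I) {a : E} (ha : a ∈ c.Φ) : pr c.B a a = 2 := by
  have := c.coform_self ha
  rwa [c.coform_apply] at this

lemma pr_symm_zero' (c : RootSystemCtx E I) {a b : E} (ha : a ∈ c.Φ)
    (h : pr c.B b a = 0) : pr c.B a b = 0 := by
  have ha0 : a ≠ 0 := fun h0 => c.zero_nmem (h0 ▸ ha)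
  have hBa : c.B a a ≠ 0 := ne_of_gt (c.Bpos a ha0)
  have hba : c.B b a = 0 := by
    rw [pr, div_eq_zero_iff] at h
    rcases h with h | h
    · linarith
    · exact absurd h hBa
  rw [pr, c.Bsymm a b, hba, mul_zero, zero_div]

lemma s_mem_weyl' (c : RootSystemCtx E I) (i : I) : c.s i ∈ c.Weyl :=
  Subgroup.subset_closure (Set.mem_range_self i)

lemma mem_add' (c : RootSystemCtx E I) (P : PsiData c) (i : I) (μ : E)
    (hμ : μ ∈ P.Ψ) (h : pr c.B μ (c.α i) = -1) : μ + c.α i ∈ P.Ψ := by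
  have hw := P.stab μ hμ (c.s i) (s_mem_weyl' c i)
  rw [c.s_apply, h] at hw
  simpa using hw

lemma mem_sub' (c : RootSystemCtx E I) (P : PsiData c) (i : I) (μ : E)
    (hμ : μ ∈ P.Ψ) (h : pr c.B μ (c.α i) = 1) : μ - c.α i ∈ P.Ψ := by
  have hw := P.stab μ hμ (c.s i) (s_mem_weyl' c i)
  rw [c.s_apply, h] at hw
  simpa using hw

lemma aij_nonpos' (c : RootSystemCtx E I) {i j : I} (hij : i ≠ j) :
    pr c.B (c.α j) (c.α i) ≤ 0 := by
  by_contra hcon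
  push_neg at hcon
  set p := pr c.B (c.α j) (c.α i) with hp
  have hβ : c.α j - p • c.α i ∈ c.Φ := c.reflect_mem _ (c.α_mem i) _ (c.α_mem j)
  have key : ∀ cf : I → ℚ, (∑ k, cf k • c.α k = c.α j - p • c.α i) →
      cf i = -p ∧ cf j = 1 := by
    classical
    intro cf hcf
    have hd : c.α j - p • c.α i =
        ∑ k, ((if k = j then (1 : ℚ) else 0) + if k = i then -p else 0) • c.α k := by
      simp only [add_smul, Finset.sum_add_distrib, ite_smul, zero_smul, one_smul,
        Finset.sum_ite_eq', Finset.mem_univ, if_true, neg_smul]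
      abel
    have hz : ∑ k, (cf k -
        ((if k = j then (1 : ℚ) else 0) + if k = i then -p else 0)) • c.α k = 0 := by
      simp only [sub_smul, Finset.sum_sub_distrib, ← hd, hcf, sub_self]
    have h0 := Fintype.linearIndependent_iff.mp c.α_indep _ hz
    have hi := h0 i
    have hj' := h0 j
    simp only [if_neg hij, if_neg (Ne.symm hij)] at hi hj'
    norm_num at hi hj'
    constructor
    · linarith
    · linarith
  rcases c.pos_neg _ hβ with ⟨cf, hcf, heq⟩ | ⟨cf, hcf, heq⟩
  · have hk := key (fun k => (cf k : ℚ)) heq.symm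
    have h1 : (0 : ℚ) ≤ (cf i : ℚ) := by exact_mod_cast hcf i
    linarith [hk.1]
  · have hk := key (fun k => (cf k : ℚ)) heq.symm
    have h1 : (cf j : ℚ) ≤ 0 := by exact_mod_cast hcf j
    linarith [hk.2]

lemma ad_cube' {R : Type*} [Ring R] {e : R} (h : e * e = 0) (y : R) :
    ⁅e, ⁅e, ⁅e, y⁆⁆⁆ = 0 := by
  have h' : ∀ x : R, e * (e * x) = 0 := fun x => by rw [← mul_assoc, h, zero_mul]
  simp only [Ring.lie_def, mul_sub, sub_mul, mul_assoc, h, h', mul_zero, zero_mul,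
    sub_zero, zero_sub, mul_neg, neg_mul, neg_neg, neg_zero, add_zero, zero_add]

end SerreAux

/-- Lemma 2.4(c): the Serre relations ad(eᵢ)^(1-aᵢⱼ)(eⱼ) = 0 = ad(fᵢ)^(1-aᵢⱼ)(fⱼ). -/
theorem stmt_3 {E I : Type} [AddCommGroup E] [Module ℚ E] [Fintype I]
    (c : RootSystemCtx E I) (P : PsiData c)
    (M : Type) [AddCommGroup M] [Module ℂ M] (z : Module.Basis P.Ψ ℂ M)
    (e f : I → Module.End ℂ M)
    (he1 : ∀ (i : I) (μ : P.Ψ) (hm : (μ : E) + c.α i ∈ P.Ψ),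
      pr c.B (μ : E) (c.α i) = -1 → e i (z μ) = z ⟨(μ : E) + c.α i, hm⟩)
    (he0 : ∀ (i : I) (μ : P.Ψ), pr c.B (μ : E) (c.α i) ≠ -1 → e i (z μ) = 0)
    (hf1 : ∀ (i : I) (μ : P.Ψ) (hm : (μ : E) - c.α i ∈ P.Ψ),
      pr c.B (μ : E) (c.α i) = 1 → f i (z μ) = z ⟨(μ : E) - c.α i, hm⟩)
    (hf0 : ∀ (i : I) (μ : P.Ψ), pr c.B (μ : E) (c.α i) ≠ 1 → f i (z μ) = 0)
    (i j : I) (hij : i ≠ j) (n : ℕ)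
    (hn : (n : ℚ) = 1 - pr c.B (c.α j) (c.α i)) :
    (fun y => ⁅e i, y⁆)^[n] (e j) = 0 ∧ (fun y => ⁅f i, y⁆)^[n] (f j) = 0 := by
  obtain ⟨m, hm⟩ := c.crystal _ (c.α_mem i) _ (c.α_mem j)
  have hple := aij_nonpos' c hij
  have hm0 : m ≤ 0 := by
    rw [hm] at hple
    exact_mod_cast hple
  -- squares of the operators vanish
  have hsq : (e i * e i : Module.End ℂ M) = 0 := by
    refine z.ext fun μ => ?_
    simp only [Module.End.mul_apply, LinearMap.zero_apply]
    by_cases h1 : pr c.B (μ : E) (c.α i) = -1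
    · rw [he1 i μ (mem_add' c P i μ μ.2 h1) h1, he0]
      show pr c.B ((μ : E) + c.α i) (c.α i) ≠ -1
      rw [pr_add', pr_self' c (c.α_mem i), h1]
      norm_num
    · rw [he0 i μ h1, map_zero]
  have esq : ∀ w, e i (e i w) = 0 := fun w => by
    simpa using LinearMap.congr_fun hsq w
  have hsqf : (f i * f i : Module.End ℂ M) = 0 := by
    refine z.ext fun μ => ?_
    simp only [Module.End.mul_apply, LinearMap.zero_apply]
    by_cases h1 : pr c.B (μ : E) (c.α i) = 1
    · rw [hf1 i μ (mem_sub' c P i μ μ.2 h1) h1, hf0]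
      show pr c.B ((μ : E) - c.α i) (c.α i) ≠ 1
      rw [pr_sub', pr_self' c (c.α_mem i), h1]
      norm_num
    · rw [hf0 i μ h1, map_zero]
  have fsq : ∀ w, f i (f i w) = 0 := fun w => by
    simpa using LinearMap.congr_fun hsqf w
  have hm3 : m ≤ -2 ∨ m = -1 ∨ m = 0 := by omega
  rcases hm3 with hc | hc | hc
  · -- n ≥ 3 : ad(e)³ = 0 already from e² = 0
    have hn3 : 3 ≤ n := by
      have h3 : (3 : ℚ) ≤ (n : ℚ) := by
        rw [hn, hm]
        have : (m : ℚ) ≤ -2 := by exact_mod_cast hc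
        linarith
      exact_mod_cast h3
    obtain ⟨k, rfl⟩ : ∃ k, n = k + 3 := ⟨n - 3, by omega⟩
    constructor
    · rw [Function.iterate_add_apply]
      have h3 : (fun y => ⁅e i, y⁆)^[3] (e j) = 0 := ad_cube' hsq (e j)
      rw [h3, Function.iterate_fixed (by simp)]
    · rw [Function.iterate_add_apply]
      have h3 : (fun y => ⁅f i, y⁆)^[3] (f j) = 0 := ad_cube' hsqf (f j)
      rw [h3, Function.iterate_fixed (by simp)]
  · -- n = 2, a_ij = -1
    have hn2 : n = 2 := by
      have h2 : (n : ℚ) = 2 := by rw [hn, hm, hc]; norm_num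
      exact_mod_cast h2
    subst hn2
    have hp : pr c.B (c.α j) (c.α i) = -1 := by rw [hm, hc]; norm_num
    have mid : ∀ μ : P.Ψ, e i (e j (e i (z μ))) = 0 := by
      intro μ
      by_cases h1 : pr c.B (μ : E) (c.α i) = -1
      · have hm1 : (μ : E) + c.α i ∈ P.Ψ := mem_add' c P i μ μ.2 h1
        rw [he1 i μ hm1 h1]
        by_cases h2 : pr c.B ((μ : E) + c.α i) (c.α j) = -1
        · have hm2 : ((μ : E) + c.α i) + c.α j ∈ P.Ψ := mem_add' c P j _ hm1 h2
          rw [he1 j ⟨(μ : E) + c.α i, hm1⟩ hm2 h2]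
          apply he0
          show pr c.B (((μ : E) + c.α i) + c.α j) (c.α i) ≠ -1
          rw [pr_add', pr_add', pr_self' c (c.α_mem i), hp, h1]
          norm_num
        · rw [he0 j ⟨(μ : E) + c.α i, hm1⟩ h2, map_zero]
      · rw [he0 i μ h1, map_zero, map_zero]
    have fmid : ∀ μ : P.Ψ, f i (f j (f i (z μ))) = 0 := by
      intro μ
      by_cases h1 : pr c.B (μ : E) (c.α i) = 1
      · have hm1 : (μ : E) - c.α i ∈ P.Ψ := mem_sub' c P i μ μ.2 h1
        rw [hf1 i μ hm1 h1]
        by_cases h2 : pr c.B ((μ : E) - c.α i) (c.α j) = 1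
        · have hm2 : ((μ : E) - c.α i) - c.α j ∈ P.Ψ := mem_sub' c P j _ hm1 h2
          rw [hf1 j ⟨(μ : E) - c.α i, hm1⟩ hm2 h2]
          apply hf0
          show pr c.B (((μ : E) - c.α i) - c.α j) (c.α i) ≠ 1
          rw [pr_sub', pr_sub', pr_self' c (c.α_mem i), hp, h1]
          norm_num
        · rw [hf0 j ⟨(μ : E) - c.α i, hm1⟩ h2, map_zero]
      · rw [hf0 i μ h1, map_zero, map_zero]
    constructor
    · show ⁅e i, ⁅e i, e j⁆⁆ = 0
      refine z.ext fun μ => ?_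
      simp only [Ring.lie_def, LinearMap.sub_apply, Module.End.mul_apply,
        LinearMap.zero_apply, map_sub, esq, mid, map_zero, sub_zero, sub_self]
    · show ⁅f i, ⁅f i, f j⁆⁆ = 0
      refine z.ext fun μ => ?_
      simp only [Ring.lie_def, LinearMap.sub_apply, Module.End.mul_apply,
        LinearMap.zero_apply, map_sub, fsq, fmid, map_zero, sub_zero, sub_self]
  · -- n = 1, a_ij = 0
    have hn1 : n = 1 := by
      have h2 : (n : ℚ) = 1 := by rw [hn, hm, hc]; norm_num
      exact_mod_cast h2
    subst hn1
    have hp : pr c.B (c.α j) (c.α i) = 0 := by rw [hm, hc]; norm_num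
    have hq : pr c.B (c.α i) (c.α j) = 0 := pr_symm_zero' c (c.α_mem i) hp
    constructor
    · show ⁅e i, e j⁆ = 0
      rw [Ring.lie_def, sub_eq_zero]
      refine z.ext fun μ => ?_
      simp only [Module.End.mul_apply]
      by_cases hje : pr c.B (μ : E) (c.α j) = -1
      · have hmj : (μ : E) + c.α j ∈ P.Ψ := mem_add' c P j μ μ.2 hje
        rw [he1 j μ hmj hje]
        by_cases hie : pr c.B (μ : E) (c.α i) = -1
        · have hmi : (μ : E) + c.α i ∈ P.Ψ := mem_add' c P i μ μ.2 hie
          rw [he1 i μ hmi hie]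
          have h1 : pr c.B ((μ : E) + c.α j) (c.α i) = -1 := by
            rw [pr_add', hie, hp]; norm_num
          have h2 : pr c.B ((μ : E) + c.α i) (c.α j) = -1 := by
            rw [pr_add', hje, hq]; norm_num
          rw [he1 i ⟨(μ : E) + c.α j, hmj⟩ (mem_add' c P i _ hmj h1) h1,
            he1 j ⟨(μ : E) + c.α i, hmi⟩ (mem_add' c P j _ hmi h2) h2]
          congr 1
          exact Subtype.ext (add_right_comm _ _ _)
        · rw [he0 i μ hie, map_zero]
          apply he0
          show pr c.B ((μ : E) + c.α j) (c.α i) ≠ -1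
          rw [pr_add', hp, add_zero]
          exact hie
      · rw [he0 j μ hje, map_zero]
        by_cases hie : pr c.B (μ : E) (c.α i) = -1
        · rw [he1 i μ (mem_add' c P i μ μ.2 hie) hie]
          refine (he0 j _ ?_).symm
          show pr c.B ((μ : E) + c.α i) (c.α j) ≠ -1
          rw [pr_add', hq, add_zero]
          exact hje
        · rw [he0 i μ hie, map_zero]
    · show ⁅f i, f j⁆ = 0
      rw [Ring.lie_def, sub_eq_zero]
      refine z.ext fun μ => ?_
      simp only [Module.End.mul_apply]
      by_cases hje : pr c.B (μ : E) (c.α j) = 1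
      · have hmj : (μ : E) - c.α j ∈ P.Ψ := mem_sub' c P j μ μ.2 hje
        rw [hf1 j μ hmj hje]
        by_cases hie : pr c.B (μ : E) (c.α i) = 1
        · have hmi : (μ : E) - c.α i ∈ P.Ψ := mem_sub' c P i μ μ.2 hie
          rw [hf1 i μ hmi hie]
          have h1 : pr c.B ((μ : E) - c.α j) (c.α i) = 1 := by
            rw [pr_sub', hie, hp]; norm_num
          have h2 : pr c.B ((μ : E) - c.α i) (c.α j) = 1 := by
            rw [pr_sub', hje, hq]; norm_num
          rw [hf1 i ⟨(μ : E) - c.α j, hmj⟩ (mem_sub' c P i _ hmj h1) h1,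
            hf1 j ⟨(μ : E) - c.α i, hmi⟩ (mem_sub' c P j _ hmi h2) h2]
          congr 1
          exact Subtype.ext (sub_right_comm _ _ _)
        · rw [hf0 i μ hie, map_zero]
          apply hf0
          show pr c.B ((μ : E) - c.α j) (c.α i) ≠ 1
          rw [pr_sub', hp, sub_zero]
          exact hie
      · rw [hf0 j μ hje, map_zero]
        by_cases hie : pr c.B (μ : E) (c.α i) = 1
        · rw [hf1 i μ (mem_sub' c P i μ μ.2 hie) hie]
          refine (hf0 j _ ?_).symm
          show pr c.B ((μ : E) - c.α i) (c.α j) ≠ 1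
          rw [pr_sub', hq, sub_zero]
          exact hje
        · rw [hf0 i μ hie, map_zero]
end
end
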